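/- Let m ≥ 38 be an even integer and let G be a graph attaining the maximum spectral radius among all H(4,3)-free graphs with m edges and no isolated vertices. Then G is connected. -/

import Mathlib

open SimpleGraph Matrix

/-- `H` occurs as a subgraph of `G`: an injective map sending adjacent vertices to
adjacent vertices. -/
def ContainsSub {α β : Type*} (H : SimpleGraph α) (G : SimpleGraph β) : Prop :=
  ∃ f : α → β, Function.Injective f ∧ ∀ ⦃a b⦄, H.Adj a b → G.Adj (f a) (f b)

/-- The graph `H(4,3)`: a 4-cycle `0-1-2-3-0` and a triangle `0-4-5-0`
sharing the common vertex `0`. -/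
def H43 : SimpleGraph (Fin 6) :=
  SimpleGraph.fromEdgeSet {s(0,1), s(1,2), s(2,3), s(3,0), s(0,4), s(4,5), s(5,0)}

/-- `G` is `H(4,3)`-free. -/
def H43Free {β : Type*} (G : SimpleGraph β) : Prop := ¬ ContainsSub H43 G

open Classical in
/-- The real adjacency matrix of a simple graph. -/
noncomputable def adjMat {V : Type*} (G : SimpleGraph V) : Matrix V V ℝ :=
  fun i j => if G.Adj i j then 1 else 0

/-- The spectral radius of a finite simple graph: the largest eigenvalue of its
adjacency matrix. -/
noncomputable def specRad {V : Type*} [Fintype V] (G : SimpleGraph V) : ℝ :=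
  sSup {t : ℝ | ∃ x : V → ℝ, x ≠ 0 ∧ (adjMat G).mulVec x = t • x}

/-- `S_{n,2} = K₂ ∨ (n-2)K₁`: vertices `0` and `1` are adjacent to everything. -/
def Sgraph (n : ℕ) : SimpleGraph (Fin n) where
  Adj i j := i ≠ j ∧ (i.val < 2 ∨ j.val < 2)
  symm := ⟨by rintro i j ⟨h1, h2⟩; exact ⟨h1.symm, h2.symm⟩⟩
  loopless := ⟨by rintro i ⟨h1, _⟩; exact h1 rfl⟩

/-- `S⁻_{n,2}`: the graph `S_{n,2}` with the edge `{1,2}` (an edge incident to a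
vertex of degree two) deleted. -/
def SgraphMinus (n : ℕ) : SimpleGraph (Fin n) where
  Adj i j := i ≠ j ∧ (i.val < 2 ∨ j.val < 2) ∧
    ¬(i.val = 1 ∧ j.val = 2) ∧ ¬(i.val = 2 ∧ j.val = 1)
  symm := ⟨by
    rintro i j ⟨h1, h2, h3, h4⟩
    exact ⟨h1.symm, h2.symm, fun hc => h4 ⟨hc.2, hc.1⟩, fun hc => h3 ⟨hc.2, hc.1⟩⟩⟩
  loopless := ⟨by rintro i ⟨h1, _⟩; exact h1 rfl⟩

/-- The graph obtained from `S_{k,2}` (on vertices `0,…,k-1`, with `0,1` dominating)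
by joining the maximum degree vertex `0` to `l` new vertices `k,…,k+l-1`. -/
def Fgraph (k l : ℕ) : SimpleGraph (Fin (k + l)) where
  Adj i j := i ≠ j ∧ (i.val = 0 ∨ j.val = 0 ∨
    (i.val < k ∧ j.val < k ∧ (i.val = 1 ∨ j.val = 1)))
  symm := ⟨by
    rintro i j ⟨h1, h2⟩
    refine ⟨h1.symm, ?_⟩
    rcases h2 with h | h | ⟨ha, hb, hc⟩
    · exact Or.inr (Or.inl h)
    · exact Or.inl h
    · exact Or.inr (Or.inr ⟨hb, ha, hc.symm⟩)⟩
  loopless := ⟨by rintro i ⟨h1, _⟩; exact h1 rfl⟩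

/-- The star `K_{1,t}` with center `0`. -/
def starG (t : ℕ) : SimpleGraph (Fin (t + 1)) where
  Adj i j := i ≠ j ∧ (i.val = 0 ∨ j.val = 0)
  symm := ⟨by rintro i j ⟨h1, h2⟩; exact ⟨h1.symm, h2.symm⟩⟩
  loopless := ⟨by rintro i ⟨h1, _⟩; exact h1 rfl⟩

/-- `e(S)`: the number of edges of `G` with both endpoints in `S`. -/
noncomputable def eIn {V : Type*} (G : SimpleGraph V) (S : Set V) : ℕ :=
  {e ∈ G.edgeSet | ∀ v ∈ e, v ∈ S}.ncard

/-- `e(S,T)`: the number of edges of `G` with one endpoint in `S` and the other in `T`. -/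
noncomputable def eBetween {V : Type*} (G : SimpleGraph V) (S T : Set V) : ℕ :=
  {e ∈ G.edgeSet | ∃ a ∈ S, ∃ b ∈ T, e = s(a, b)}.ncard

/-- `G` attains the maximum spectral radius among all `H(4,3)`-free graphs with `m`
edges and no isolated vertices. -/
def IsExtremal (m : ℕ) {V : Type*} [Fintype V] (G : SimpleGraph V) : Prop :=
  H43Free G ∧ G.edgeSet.ncard = m ∧ (∀ v : V, ∃ w, G.Adj v w) ∧
    ∀ (n : ℕ) (G' : SimpleGraph (Fin n)), H43Free G' → G'.edgeSet.ncard = m →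
      (∀ v, ∃ w, G'.Adj v w) → specRad G' ≤ specRad G

/-! ### Auxiliary spectral lemmas -/

section Spectral

set_option linter.unusedSectionVars false

variable {V : Type*} [Fintype V]

lemma adjMat_isHermitian (G : SimpleGraph V) : (adjMat G).IsHermitian := by
  unfold Matrix.IsHermitian
  ext i j
  simp only [Matrix.conjTranspose_apply, adjMat, star_trivial]
  rw [SimpleGraph.adj_comm]

lemma adjMat_nonneg (G : SimpleGraph V) (i j : V) : 0 ≤ adjMat G i j := by
  unfold adjMat; split <;> norm_num

lemma adjMat_symm (G : SimpleGraph V) (i j : V) : adjMat G i j = adjMat G j i := by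
  unfold adjMat; rw [SimpleGraph.adj_comm]

lemma dot_expand (A : Matrix V V ℝ) (x y : V → ℝ) :
    (A.mulVec x) ⬝ᵥ y = ∑ i, ∑ j, A i j * x j * y i := by
  simp [dotProduct, Matrix.mulVec, Finset.sum_mul]

lemma dot_sym (G : SimpleGraph V) (x y : V → ℝ) :
    ((adjMat G).mulVec x) ⬝ᵥ y = x ⬝ᵥ ((adjMat G).mulVec y) := by
  rw [dot_expand]
  rw [Finset.sum_comm]
  simp only [dotProduct, Matrix.mulVec, Finset.mul_sum]
  apply Finset.sum_congr rfl; intro j _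
  apply Finset.sum_congr rfl; intro i _
  rw [adjMat_symm G i j]; ring

theorem specRad_master [Nonempty V] (G : SimpleGraph V) :
    (∀ x : V → ℝ, (adjMat G).mulVec x ⬝ᵥ x ≤ specRad G * (x ⬝ᵥ x)) ∧
    (∀ x : V → ℝ, (adjMat G).mulVec x ⬝ᵥ x = specRad G * (x ⬝ᵥ x) →
      (adjMat G).mulVec x = specRad G • x) ∧
    (∃ x : V → ℝ, x ≠ 0 ∧ (∀ v, 0 ≤ x v) ∧ (adjMat G).mulVec x = specRad G • x) := by
  classical
  set A := adjMat G with hAdef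
  have hA := adjMat_isHermitian G
  set b := hA.eigenvectorBasis with hbdef
  set μ := hA.eigenvalues with hμdef
  set c : (V → ℝ) → V → ℝ :=
    fun x i => b.repr ((WithLp.equiv 2 (V → ℝ)).symm x) i with hcdef
  have hK0 : ∀ x y : V → ℝ,
      (inner ℝ ((WithLp.equiv 2 (V → ℝ)).symm x) ((WithLp.equiv 2 (V → ℝ)).symm y) : ℝ)
        = x ⬝ᵥ y := by
    intro x y
    change dotProduct y (star x) = x ⬝ᵥ y
    simp [dotProduct, mul_comm]
  have hcb : ∀ (x : V → ℝ) (i : V), c x i = (⇑(b i)) ⬝ᵥ x := by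
    intro x i
    have h1 : c x i = (inner ℝ (b i) ((WithLp.equiv 2 (V → ℝ)).symm x) : ℝ) :=
      b.repr_apply_apply _ i
    rw [h1]
    exact hK0 (⇑(b i)) x
  have hK1 : ∀ x y : V → ℝ, x ⬝ᵥ y = ∑ i, c x i * c y i := by
    intro x y
    rw [← hK0 x y, ← b.repr.inner_map_map]
    rw [EuclideanSpace.inner_eq_star_dotProduct]
    simp [dotProduct]
    exact Finset.sum_congr rfl fun i _ => mul_comm _ _
  have hK2 : ∀ (x : V → ℝ) (i : V), c (A.mulVec x) i = μ i * c x i := by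
    intro x i
    rw [hcb, hcb, ← dot_sym G, hA.mulVec_eigenvectorBasis i]
    rw [smul_dotProduct]
    rfl
  have hcinj : ∀ x y : V → ℝ, c x = c y → x = y := by
    intro x y h
    have : (WithLp.equiv 2 (V → ℝ)).symm x = (WithLp.equiv 2 (V → ℝ)).symm y := by
      apply b.repr.injective
      apply PiLp.ext
      intro i
      exact congrFun h i
    exact (WithLp.equiv 2 (V → ℝ)).symm.injective this
  have hclin : ∀ (t : ℝ) (x : V → ℝ) (i : V), c (t • x) i = t * c x i := by
    intro t x i
    rw [hcb, hcb, dotProduct_smul]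
    rfl
  obtain ⟨i₀, hi₀⟩ : ∃ i₀, ∀ i, μ i ≤ μ i₀ := Finite.exists_max μ
  have hb0 : ∀ i : V, (⇑(b i) : V → ℝ) ≠ 0 := by
    intro i h0
    exact b.orthonormal.ne_zero i (PiLp.ext fun v => congrFun h0 v)
  have hgreat : IsGreatest {t : ℝ | ∃ x : V → ℝ, x ≠ 0 ∧ A.mulVec x = t • x} (μ i₀) := by
    constructor
    · exact ⟨⇑(b i₀), hb0 i₀, hA.mulVec_eigenvectorBasis i₀⟩
    · rintro t ⟨x, hx0, hx⟩
      have hcx : c x ≠ 0 := by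
        intro h
        apply hx0
        apply hcinj x 0
        rw [h]
        funext i
        rw [hcb]
        simp
      obtain ⟨i, hi⟩ := Function.ne_iff.mp hcx
      have h1 : μ i * c x i = t * c x i := by
        rw [← hK2 x i, hx, hclin]
      have : μ i = t := by
        exact mul_right_cancel₀ hi h1
      rw [← this]; exact hi₀ i
  have hspec : specRad G = μ i₀ := hgreat.csSup_eq
  have hdAx : ∀ x : V → ℝ, (A.mulVec x) ⬝ᵥ x = ∑ i, μ i * (c x i * c x i) := by
    intro x
    rw [hK1 (A.mulVec x) x]
    apply Finset.sum_congr rfl; intro i _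
    rw [hK2]; ring
  have part1 : ∀ x : V → ℝ, (A.mulVec x) ⬝ᵥ x ≤ specRad G * (x ⬝ᵥ x) := by
    intro x
    rw [hspec, hdAx, hK1 x x, Finset.mul_sum]
    apply Finset.sum_le_sum
    intro i _
    exact mul_le_mul_of_nonneg_right (hi₀ i) (mul_self_nonneg _)
  have part2 : ∀ x : V → ℝ, (A.mulVec x) ⬝ᵥ x = specRad G * (x ⬝ᵥ x) →
      A.mulVec x = specRad G • x := by
    intro x hx
    rw [hspec] at hx ⊢
    have h0 : ∑ i, (μ i₀ - μ i) * (c x i * c x i) = 0 := by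
      have := hx
      rw [hdAx, hK1 x x, Finset.mul_sum] at this
      have h2 : ∑ i, (μ i₀ - μ i) * (c x i * c x i)
          = ∑ i, μ i₀ * (c x i * c x i) - ∑ i, μ i * (c x i * c x i) := by
        rw [← Finset.sum_sub_distrib]
        apply Finset.sum_congr rfl; intro i _; ring
      rw [h2, ← this]
      ring
    have hterm : ∀ i ∈ Finset.univ, (μ i₀ - μ i) * (c x i * c x i) = 0 :=
      (Finset.sum_eq_zero_iff_of_nonneg (fun i _ =>
        mul_nonneg (sub_nonneg.mpr (hi₀ i)) (mul_self_nonneg _))).mp h0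
    apply hcinj
    funext i
    rw [hK2, hclin]
    rcases mul_eq_zero.mp (hterm i (Finset.mem_univ i)) with h | h
    · have : μ i = μ i₀ := by linarith [sub_eq_zero.mp h]
      rw [this]
    · rw [mul_self_eq_zero.mp h, mul_zero, mul_zero]
  refine ⟨part1, part2, ?_⟩
  set x₁ : V → ℝ := ⇑(b i₀) with hx₁
  set x₀ : V → ℝ := fun v => |x₁ v| with hx₀
  have h11 : A.mulVec x₁ = μ i₀ • x₁ := hA.mulVec_eigenvectorBasis i₀
  have hd1 : (A.mulVec x₁) ⬝ᵥ x₁ = μ i₀ * (x₁ ⬝ᵥ x₁) := by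
    rw [h11, smul_dotProduct]; rfl
  have hxx : x₀ ⬝ᵥ x₀ = x₁ ⬝ᵥ x₁ := by
    apply Finset.sum_congr rfl; intro i _
    simp [hx₀, abs_mul_abs_self]
  have hge : (A.mulVec x₁) ⬝ᵥ x₁ ≤ (A.mulVec x₀) ⬝ᵥ x₀ := by
    rw [dot_expand, dot_expand]
    apply Finset.sum_le_sum; intro i _
    apply Finset.sum_le_sum; intro j _
    have h1 : x₁ j * x₁ i ≤ x₀ j * x₀ i := by
      calc x₁ j * x₁ i ≤ |x₁ j * x₁ i| := le_abs_self _
      _ = x₀ j * x₀ i := abs_mul _ _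
    calc A i j * x₁ j * x₁ i = A i j * (x₁ j * x₁ i) := by ring
    _ ≤ A i j * (x₀ j * x₀ i) := mul_le_mul_of_nonneg_left h1 (adjMat_nonneg G i j)
    _ = A i j * x₀ j * x₀ i := by ring
  have heq : (A.mulVec x₀) ⬝ᵥ x₀ = specRad G * (x₀ ⬝ᵥ x₀) := by
    have hle := part1 x₀
    have : specRad G * (x₀ ⬝ᵥ x₀) = (A.mulVec x₁) ⬝ᵥ x₁ := by
      rw [hxx, hd1, hspec]
    linarith
  refine ⟨x₀, ?_, fun v => abs_nonneg _, part2 x₀ heq⟩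
  intro h
  apply hb0 i₀
  funext v
  have := congrFun h v
  simp only [hx₀] at this
  simpa using abs_eq_zero.mp this

end Spectral

/-! ### The surgery graph -/

section Surgery

variable {V : Type*}

/-- Delete the edge `pq` from `G` and attach a new pendant vertex to `u`. -/
def surgery (G : SimpleGraph V) (u p q : V) : SimpleGraph (V ⊕ Unit) where
  Adj x y :=
    (∃ a b, x = Sum.inl a ∧ y = Sum.inl b ∧ G.Adj a b ∧ ¬(a = p ∧ b = q) ∧ ¬(a = q ∧ b = p)) ∨
    (x = Sum.inl u ∧ y = Sum.inr ()) ∨ (x = Sum.inr () ∧ y = Sum.inl u)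
  symm := ⟨by
    rintro x y (⟨a, b, rfl, rfl, hab, h1, h2⟩ | ⟨rfl, rfl⟩ | ⟨rfl, rfl⟩)
    · exact Or.inl ⟨b, a, rfl, rfl, hab.symm, fun hc => h2 ⟨hc.2, hc.1⟩,
        fun hc => h1 ⟨hc.2, hc.1⟩⟩
    · exact Or.inr (Or.inr ⟨rfl, rfl⟩)
    · exact Or.inr (Or.inl ⟨rfl, rfl⟩)⟩
  loopless := ⟨by
    rintro x (⟨a, b, rfl, heq, hab, -, -⟩ | ⟨rfl, heq⟩ | ⟨rfl, heq⟩)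
    · obtain rfl : a = b := Sum.inl.inj heq
      exact G.loopless.irrefl a hab
    · cases heq
    · cases heq⟩

lemma surgery_adj {G : SimpleGraph V} {u p q : V} {x y : V ⊕ Unit} :
    (surgery G u p q).Adj x y ↔
    (∃ a b, x = Sum.inl a ∧ y = Sum.inl b ∧ G.Adj a b ∧ ¬(a = p ∧ b = q) ∧ ¬(a = q ∧ b = p)) ∨
    (x = Sum.inl u ∧ y = Sum.inr ()) ∨ (x = Sum.inr () ∧ y = Sum.inl u) := Iff.rfl

lemma surgery_adj_inl_inl {G : SimpleGraph V} {u p q a b : V} :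
    (surgery G u p q).Adj (Sum.inl a) (Sum.inl b) ↔
      G.Adj a b ∧ ¬(a = p ∧ b = q) ∧ ¬(a = q ∧ b = p) := by
  constructor
  · rintro (⟨a', b', h1, h2, hab, hx, hy⟩ | ⟨-, h⟩ | ⟨h, -⟩)
    · obtain rfl : a = a' := Sum.inl.inj h1
      obtain rfl : b = b' := Sum.inl.inj h2
      exact ⟨hab, hx, hy⟩
    · cases h
    · cases h
  · rintro ⟨h, h1, h2⟩
    exact Or.inl ⟨a, b, rfl, rfl, h, h1, h2⟩

lemma surgery_adj_inr {G : SimpleGraph V} {u p q : V} {w : V ⊕ Unit} :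
    (surgery G u p q).Adj (Sum.inr ()) w ↔ w = Sum.inl u := by
  constructor
  · rintro (⟨a, b, h, -, -, -, -⟩ | ⟨h, -⟩ | ⟨-, h⟩)
    · cases h
    · cases h
    · exact h
  · rintro rfl
    exact Or.inr (Or.inr ⟨rfl, rfl⟩)

end Surgery

/-! ### `H43` facts -/

lemma H43_adj_iff (i j : Fin 6) :
    H43.Adj i j ↔ (s(i,j) = s(0,1) ∨ s(i,j) = s(1,2) ∨ s(i,j) = s(2,3) ∨ s(i,j) = s(3,0) ∨
      s(i,j) = s(0,4) ∨ s(i,j) = s(4,5) ∨ s(i,j) = s(5,0)) ∧ i ≠ j := by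
  simp only [H43, SimpleGraph.fromEdgeSet_adj, Set.mem_insert_iff, Set.mem_singleton_iff]

lemma H43_two_nbrs (i : Fin 6) : ∃ j k : Fin 6, j ≠ k ∧ H43.Adj i j ∧ H43.Adj i k := by
  have hd : ∀ a b : Fin 6,
      ((s(a,b) = s(0,1) ∨ s(a,b) = s(1,2) ∨ s(a,b) = s(2,3) ∨ s(a,b) = s(3,0) ∨
        s(a,b) = s(0,4) ∨ s(a,b) = s(4,5) ∨ s(a,b) = s(5,0)) ∧ a ≠ b) → H43.Adj a b :=
    fun a b h => (H43_adj_iff a b).mpr h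
  fin_cases i
  · exact ⟨1, 3, by decide, hd _ _ (by decide), hd _ _ (by decide)⟩
  · exact ⟨0, 2, by decide, hd _ _ (by decide), hd _ _ (by decide)⟩
  · exact ⟨1, 3, by decide, hd _ _ (by decide), hd _ _ (by decide)⟩
  · exact ⟨2, 0, by decide, hd _ _ (by decide), hd _ _ (by decide)⟩
  · exact ⟨0, 5, by decide, hd _ _ (by decide), hd _ _ (by decide)⟩
  · exact ⟨4, 0, by decide, hd _ _ (by decide), hd _ _ (by decide)⟩

/-- For even `m ≥ 38`, a graph attaining the maximum spectral radius
among all `H(4,3)`-free graphs with `m` edges and no isolated vertices is connected. -/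
theorem stmt6 {V : Type*} [Fintype V] (m : ℕ) (hm : 38 ≤ m) (hme : Even m)
    (G : SimpleGraph V) (hext : IsExtremal m G) :
    G.Connected := by
  classical
  by_contra hcon
  obtain ⟨hfree, hcard, hniso, hmax⟩ := hext
  have hVne : Nonempty V := by
    have hm0 : G.edgeSet.ncard ≠ 0 := by rw [hcard]; omega
    obtain ⟨e, -⟩ := Set.nonempty_of_ncard_ne_zero hm0
    exact Sym2.ind (fun a _ => ⟨a⟩) e
  haveI := hVne
  obtain ⟨a₁, b₁, hab⟩ : ∃ a b : V, ¬ G.Reachable a b := by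
    by_contra h
    push_neg at h
    exact hcon ⟨fun a b => h a b⟩
  obtain ⟨hray, hmaxim, x₀, hx0ne, hx0nn, hx0eig⟩ := specRad_master G
  set ρ := specRad G with hρdef
  obtain ⟨u, hu⟩ : ∃ u, 0 < x₀ u := by
    obtain ⟨i, hi⟩ := Function.ne_iff.mp hx0ne
    exact ⟨i, lt_of_le_of_ne (hx0nn i) (Ne.symm hi)⟩
  obtain ⟨p, hup⟩ : ∃ p, ¬ G.Reachable u p := by
    by_cases h1 : G.Reachable u a₁
    · exact ⟨b₁, fun h2 => hab (h1.symm.trans h2)⟩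
    · exact ⟨a₁, h1⟩
  obtain ⟨q, hpq⟩ := hniso p
  have huq : ¬ G.Reachable u q := fun h => hup (h.trans hpq.symm.reachable)
  set y : V → ℝ := fun v => if G.Reachable u v then x₀ v else 0 with hydef
  have hyu : 0 < y u := by
    have : y u = x₀ u := by rw [hydef]; simp only []; rw [if_pos (SimpleGraph.Reachable.refl u)]
    rw [this]; exact hu
  have hynn : ∀ v, 0 ≤ y v := by
    intro v
    by_cases h : G.Reachable u v <;> simp [hydef, h, hx0nn v]
  have hyp0 : y p = 0 := by simp [hydef, hup]
  have hyq0 : y q = 0 := by simp [hydef, huq]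
  have hy_eig : (adjMat G).mulVec y = ρ • y := by
    funext v
    show (adjMat G).mulVec y v = ρ * y v
    by_cases hv : G.Reachable u v
    · have h1 : ∀ w, adjMat G v w * y w = adjMat G v w * x₀ w := by
        intro w
        by_cases hw : G.Adj v w
        · have h2 : G.Reachable u w := hv.trans hw.reachable
          simp [hydef, h2]
        · simp [adjMat, hw]
      have h3 : (adjMat G).mulVec y v = (adjMat G).mulVec x₀ v := by
        simp only [Matrix.mulVec, dotProduct]
        exact Finset.sum_congr rfl fun w _ => h1 w
      rw [h3, hx0eig]
      show ρ * x₀ v = ρ * y v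
      simp [hydef, hv]
    · have h1 : (adjMat G).mulVec y v = 0 := by
        simp only [Matrix.mulVec, dotProduct]
        apply Finset.sum_eq_zero
        intro w _
        by_cases hw : G.Adj v w
        · have h2 : y w = 0 := by
            have h3 : ¬ G.Reachable u w := fun h => hv (h.trans hw.reachable.symm)
            simp [hydef, h3]
          rw [h2, mul_zero]
        · simp [adjMat, hw]
      rw [h1]
      have h4 : y v = 0 := by simp [hydef, hv]
      rw [h4, mul_zero]
  have hyy_pos : 0 < y ⬝ᵥ y := by
    show 0 < ∑ i, y i * y i
    exact Finset.sum_pos' (fun i _ => mul_self_nonneg (y i))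
      ⟨u, Finset.mem_univ u, mul_pos hyu hyu⟩
  -- the surgered graph
  set G' := surgery G u p q with hG'def
  set S : Set (V ⊕ Unit) := {w | ∃ w', G'.Adj w w'} with hSdef
  have hmem_inr : Sum.inr () ∈ S := ⟨Sum.inl u, surgery_adj_inr.mpr rfl⟩
  have hmem_inl_u : Sum.inl u ∈ S := ⟨Sum.inr (), (surgery_adj_inr.mpr rfl).symm⟩
  have hmem_inl : ∀ v : V, v ≠ p → v ≠ q → Sum.inl v ∈ S := by
    intro v hvp hvq
    obtain ⟨w, hw⟩ := hniso v
    exact ⟨Sum.inl w, surgery_adj_inl_inl.mpr ⟨hw, fun hc => hvp hc.1, fun hc => hvq hc.1⟩⟩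
  set n := Fintype.card ↥S with hndef
  set e0 := Fintype.equivFin ↥S with he0def
  set g : Fin n → V ⊕ Unit := fun a => (e0.symm a : ↥S) with hgdef
  have hginj : Function.Injective g := fun a b h => e0.symm.injective (Subtype.ext h)
  have hgS : ∀ a, g a ∈ S := fun a => (e0.symm a).2
  have hge : ∀ (w) (hw : w ∈ S), g (e0 ⟨w, hw⟩) = w := by
    intro w hw
    show ((e0.symm (e0 ⟨w, hw⟩)) : ↥S).val = w
    rw [Equiv.symm_apply_apply]
  set Gf := SimpleGraph.comap g G' with hGfdef
  haveI : Nonempty (Fin n) := ⟨e0 ⟨Sum.inr (), hmem_inr⟩⟩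
  -- H43-freeness of the surgered graph
  have hfree' : H43Free G' := by
    rintro ⟨f, hfinj, hfadj⟩
    have hnr : ∀ i, f i ≠ Sum.inr () := by
      intro i hi
      obtain ⟨j, k, hjk, hj, hk⟩ := H43_two_nbrs i
      have h1 := hfadj hj
      have h2 := hfadj hk
      rw [hi] at h1 h2
      rw [hG'def, surgery_adj_inr] at h1 h2
      exact hjk (hfinj (h1.trans h2.symm))
    set f' : Fin 6 → V := fun i => Sum.elim id (fun _ => u) (f i) with hf'def
    have hf' : ∀ i, f i = Sum.inl (f' i) := by
      intro i
      rcases hfi : f i with v | x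
      · simp [hf'def, hfi]
      · cases x
        exact absurd hfi (hnr i)
    apply hfree
    refine ⟨f', ?_, ?_⟩
    · intro i j hij
      apply hfinj
      rw [hf' i, hf' j, hij]
    · intro i j hij
      have h5 := hfadj hij
      rw [hf' i, hf' j, hG'def, surgery_adj_inl_inl] at h5
      exact h5.1
  -- edge set of the surgered graph
  have hpair : ∀ a b : V, ¬(a = p ∧ b = q) → ¬(a = q ∧ b = p) → s(a,b) ≠ s(p,q) := by
    intro a b h1 h2 h
    rcases Sym2.eq_iff.mp h with ⟨ha, hb⟩ | ⟨ha, hb⟩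
    · exact h1 ⟨ha, hb⟩
    · exact h2 ⟨ha, hb⟩
  have hpair' : ∀ a b : V, s(a,b) ≠ s(p,q) → ¬(a = p ∧ b = q) ∧ ¬(a = q ∧ b = p) := by
    intro a b h
    constructor
    · rintro ⟨rfl, rfl⟩; exact h rfl
    · rintro ⟨rfl, rfl⟩; exact h Sym2.eq_swap
  have hE' : G'.edgeSet = insert s(Sum.inl u, Sum.inr ())
      ((Sym2.map Sum.inl) '' (G.edgeSet \ {s(p,q)})) := by
    ext e
    induction e using Sym2.ind with
    | _ x y =>
      rw [SimpleGraph.mem_edgeSet, Set.mem_insert_iff, hG'def, surgery_adj]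
      constructor
      · rintro (⟨a, b, rfl, rfl, hab, h1, h2⟩ | ⟨rfl, rfl⟩ | ⟨rfl, rfl⟩)
        · right
          refine ⟨s(a,b), ⟨(SimpleGraph.mem_edgeSet _).mpr hab, ?_⟩, Sym2.map_pair_eq Sum.inl a b⟩
          intro hmem
          exact hpair a b h1 h2 (by simpa using hmem)
        · left; rfl
        · left; exact Sym2.eq_swap
      · rintro (h | ⟨e', he', heq⟩)
        · rcases Sym2.eq_iff.mp h with ⟨rfl, rfl⟩ | ⟨rfl, rfl⟩
          · exact Or.inr (Or.inl ⟨rfl, rfl⟩)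
          · exact Or.inr (Or.inr ⟨rfl, rfl⟩)
        · revert he' heq
          induction e' using Sym2.ind with
          | _ a b =>
            rintro ⟨hmem, hne⟩ heq
            rw [Sym2.map_pair_eq] at heq
            have hab2 := (SimpleGraph.mem_edgeSet _).mp hmem
            have hnp := hpair' a b (by simpa using hne)
            rcases Sym2.eq_iff.mp heq with ⟨rfl, rfl⟩ | ⟨rfl, rfl⟩
            · exact Or.inl ⟨a, b, rfl, rfl, hab2, hnp.1, hnp.2⟩
            · exact Or.inl ⟨b, a, rfl, rfl, hab2.symm, fun hc => hnp.2 ⟨hc.2, hc.1⟩,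
                fun hc => hnp.1 ⟨hc.2, hc.1⟩⟩
  have hSym2inl : Function.Injective (Sym2.map (Sum.inl : V → V ⊕ Unit)) :=
    Sym2.map.injective Sum.inl_injective
  have hnotmem : s(Sum.inl u, Sum.inr ()) ∉ (Sym2.map Sum.inl) '' (G.edgeSet \ {s(p,q)}) := by
    rintro ⟨e', -, heq⟩
    revert heq
    induction e' using Sym2.ind with
    | _ a b =>
      intro heq
      rw [Sym2.map_pair_eq] at heq
      rcases Sym2.eq_iff.mp heq with ⟨-, h⟩ | ⟨h, -⟩ <;> cases h
  have hmemG : s(p,q) ∈ G.edgeSet := hpq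
  have hE'card : G'.edgeSet.ncard = m := by
    rw [hE', Set.ncard_insert_of_notMem hnotmem,
      Set.ncard_image_of_injective _ hSym2inl, Set.ncard_diff_singleton_of_mem hmemG, hcard]
    omega
  have hEf : Sym2.map g '' Gf.edgeSet = G'.edgeSet := by
    ext e
    constructor
    · rintro ⟨e', he', rfl⟩
      revert he'
      induction e' using Sym2.ind with
      | _ a b =>
        intro he'
        rw [Sym2.map_pair_eq]
        exact (SimpleGraph.mem_edgeSet _).mpr ((SimpleGraph.mem_edgeSet _).mp he')
    · intro he
      induction e using Sym2.ind with
      | _ x y =>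
        have hadj := (SimpleGraph.mem_edgeSet _).mp he
        have hx : x ∈ S := ⟨y, hadj⟩
        have hy : y ∈ S := ⟨x, hadj.symm⟩
        refine ⟨s(e0 ⟨x, hx⟩, e0 ⟨y, hy⟩), ?_, ?_⟩
        · apply (SimpleGraph.mem_edgeSet _).mpr
          show G'.Adj (g (e0 ⟨x, hx⟩)) (g (e0 ⟨y, hy⟩))
          rw [hge x hx, hge y hy]
          exact hadj
        · rw [Sym2.map_pair_eq, hge x hx, hge y hy]
  have hEfcard : Gf.edgeSet.ncard = m := by
    rw [← hE'card, ← hEf, Set.ncard_image_of_injective _ (Sym2.map.injective hginj)]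
  have hfreef : H43Free Gf := by
    rintro ⟨f, hfinj, hfadj⟩
    exact hfree' ⟨g ∘ f, hginj.comp hfinj, fun a b h => hfadj h⟩
  have hnisof : ∀ a : Fin n, ∃ b, Gf.Adj a b := by
    intro a
    obtain ⟨w', hw'⟩ := hgS a
    have hw'S : w' ∈ S := ⟨g a, hw'.symm⟩
    refine ⟨e0 ⟨w', hw'S⟩, ?_⟩
    show G'.Adj (g a) (g (e0 ⟨w', hw'S⟩))
    rw [hge w' hw'S]
    exact hw'
  obtain ⟨hrayf, hmaximf, -⟩ := specRad_master Gf
  set yh : V ⊕ Unit → ℝ := Sum.elim y (fun _ => 0) with hyhdef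
  set z : Fin n → ℝ := fun a => yh (g a) with hzdef
  have hyl : ∀ t, yh (Sum.inl t) = y t := fun t => rfl
  have hyh_off : ∀ w, w ∉ S → yh w = 0 := by
    intro w hw
    rcases w with v | x
    · show y v = 0
      by_contra h0
      have hvreach : G.Reachable u v := by
        by_contra hr
        exact h0 (by simp [hydef, hr])
      exact hw (hmem_inl v (fun h => hup (h ▸ hvreach)) (fun h => huq (h ▸ hvreach)))
    · cases x
      exact absurd hmem_inr hw
  have hsum : ∀ F : (V ⊕ Unit) → ℝ, (∀ w, w ∉ S → F w = 0) →
      ∑ a : Fin n, F (g a) = ∑ w : V ⊕ Unit, F w := by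
    intro F hF
    have h1 : ∑ s : ↥S, F ↑s = ∑ a : Fin n, F (g a) := by
      rw [← Equiv.sum_comp e0 (fun a => F (g a))]
      apply Finset.sum_congr rfl
      intro s _
      congr 1
      exact (hge s.1 s.2).symm
    calc ∑ a : Fin n, F (g a) = ∑ s : ↥S, F ↑s := h1.symm
    _ = ∑ w ∈ S.toFinset, F w := (Finset.sum_subtype S.toFinset (fun x => Set.mem_toFinset) F).symm
    _ = ∑ w, F w := Finset.sum_subset (Finset.subset_univ _)
        (fun x _ hx => hF x (fun hxS => hx (Set.mem_toFinset.mpr hxS)))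
  have hzz : z ⬝ᵥ z = y ⬝ᵥ y := by
    have h1 : ∑ a : Fin n, yh (g a) * yh (g a) = ∑ w : V ⊕ Unit, yh w * yh w :=
      hsum (fun w => yh w * yh w) (fun w hw => by simp [hyh_off w hw])
    have h2 : ∑ w : V ⊕ Unit, yh w * yh w = y ⬝ᵥ y := by
      rw [Fintype.sum_sum_type]
      have h3 : ∑ x : Unit, yh (Sum.inr x) * yh (Sum.inr x) = 0 := by simp [hyhdef]
      rw [h3, add_zero]
      rfl
    show ∑ a : Fin n, yh (g a) * yh (g a) = y ⬝ᵥ y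
    rw [h1, h2]
  have hBA : ∀ a b, adjMat Gf a b = adjMat G' (g a) (g b) := by
    intro a b
    simp only [adjMat]
    by_cases h : G'.Adj (g a) (g b)
    · rw [if_pos (show Gf.Adj a b from h), if_pos h]
    · rw [if_neg (show ¬ Gf.Adj a b from h), if_neg h]
  have hQ : (adjMat Gf).mulVec z ⬝ᵥ z = (adjMat G).mulVec y ⬝ᵥ y := by
    rw [dot_expand, dot_expand]
    calc ∑ a, ∑ b, adjMat Gf a b * z b * z a
        = ∑ a, ∑ b, adjMat G' (g a) (g b) * yh (g b) * yh (g a) := by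
          apply Finset.sum_congr rfl; intro a _
          apply Finset.sum_congr rfl; intro b _
          rw [hBA]
      _ = ∑ a, ∑ w', adjMat G' (g a) w' * yh w' * yh (g a) := by
          apply Finset.sum_congr rfl; intro a _
          exact hsum (fun w' => adjMat G' (g a) w' * yh w' * yh (g a))
            (fun w hw => by simp [hyh_off w hw])
      _ = ∑ w, ∑ w', adjMat G' w w' * yh w' * yh w := by
          exact hsum (fun w => ∑ w', adjMat G' w w' * yh w' * yh w)
            (fun w hw => by simp [hyh_off w hw])
      _ = ∑ v, ∑ v', adjMat G v v' * y v' * y v := by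
          rw [Fintype.sum_sum_type]
          have hinr : ∑ x : Unit, ∑ w', adjMat G' (Sum.inr x) w' * yh w' * yh (Sum.inr x) = 0 := by
            simp [hyhdef]
          rw [hinr, add_zero]
          apply Finset.sum_congr rfl; intro v _
          rw [Fintype.sum_sum_type]
          have h2 : ∑ x : Unit,
              adjMat G' (Sum.inl v) (Sum.inr x) * yh (Sum.inr x) * yh (Sum.inl v) = 0 := by
            simp [hyhdef]
          rw [h2, add_zero]
          apply Finset.sum_congr rfl; intro v' _
          rw [hyl, hyl]
          by_cases hadj : G'.Adj (Sum.inl v) (Sum.inl v')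
          · have hGadj : G.Adj v v' := by
              rw [hG'def, surgery_adj_inl_inl] at hadj
              exact hadj.1
            simp only [adjMat]
            rw [if_pos hadj, if_pos hGadj]
          · by_cases hGadj : G.Adj v v'
            · have hcase : (v = p ∧ v' = q) ∨ (v = q ∧ v' = p) := by
                by_contra hc
                apply hadj
                rw [hG'def, surgery_adj_inl_inl]
                exact ⟨hGadj, fun h12 => hc (Or.inl h12), fun h12 => hc (Or.inr h12)⟩
              have hy0 : y v' * y v = 0 := by
                rcases hcase with ⟨rfl, rfl⟩ | ⟨rfl, rfl⟩
                · rw [hyq0]; ring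
                · rw [hyp0]; ring
              simp only [adjMat]
              rw [if_neg hadj, if_pos hGadj, zero_mul, zero_mul, one_mul]
              exact hy0.symm
            · simp only [adjMat]
              rw [if_neg hadj, if_neg hGadj]
  have hfinal : (adjMat Gf).mulVec z ⬝ᵥ z = ρ * (z ⬝ᵥ z) := by
    rw [hQ, hy_eig, smul_dotProduct, hzz]
    rfl
  have hle : specRad Gf ≤ ρ := hmax n Gf hfreef hEfcard hnisof
  have hzzpos : 0 < z ⬝ᵥ z := by rw [hzz]; exact hyy_pos
  have hge2 : ρ ≤ specRad Gf := by
    have h := hrayf z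
    rw [hfinal] at h
    exact le_of_mul_le_mul_right h hzzpos
  have hEq : specRad Gf = ρ := le_antisymm hle hge2
  have heig : (adjMat Gf).mulVec z = ρ • z := by
    have h := hmaximf z (by rw [hfinal, hEq])
    rw [hEq] at h
    exact h
  -- the contradiction at the pendant vertex
  set a₀ := e0 ⟨Sum.inr (), hmem_inr⟩ with ha₀def
  set b₀ := e0 ⟨Sum.inl u, hmem_inl_u⟩ with hb₀def
  have hga₀ : g a₀ = Sum.inr () := by rw [ha₀def]; exact hge _ hmem_inr
  have hgb₀ : g b₀ = Sum.inl u := by rw [hb₀def]; exact hge _ hmem_inl_u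
  have hza₀ : z a₀ = 0 := by
    show yh (g a₀) = 0
    rw [hga₀]
    rfl
  have hterm : adjMat Gf a₀ b₀ * z b₀ = y u := by
    rw [hBA, hga₀, hgb₀]
    have hadj : G'.Adj (Sum.inr ()) (Sum.inl u) := by
      rw [hG'def, surgery_adj_inr]
    simp only [adjMat]
    rw [if_pos hadj]
    show 1 * yh (g b₀) = y u
    rw [hgb₀]
    exact one_mul (y u)
  have hsingle : ∑ b, adjMat Gf a₀ b * z b = adjMat Gf a₀ b₀ * z b₀ := by
    apply Finset.sum_eq_single b₀
    · intro b _ hb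
      have hgb : g b ≠ Sum.inl u := fun h => hb (hginj (h.trans hgb₀.symm))
      have hnadj : ¬ Gf.Adj a₀ b := by
        intro h
        have h' : G'.Adj (Sum.inr ()) (g b) := hga₀ ▸ h
        rw [hG'def, surgery_adj_inr] at h'
        exact hgb h'
      simp only [adjMat]
      rw [if_neg hnadj, zero_mul]
    · intro h
      exact absurd (Finset.mem_univ b₀) h
  have h2 : ((adjMat Gf).mulVec z) a₀ = y u := by
    show ∑ b, adjMat Gf a₀ b * z b = y u
    rw [hsingle, hterm]
  have h1 : ((adjMat Gf).mulVec z) a₀ = ρ * z a₀ := congrFun heig a₀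
  rw [h2, hza₀, mul_zero] at h1
  exact absurd h1 (ne_of_gt hyu)
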